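/- Let 𝔫 be a finite-dimensional nilpotent Lie algebra over ℂ, let ρ : 𝔫 → M_n(ℂ) be a Lie algebra homomorphism, and let s : 𝔫 → M_n(ℂ) be the map assigning to each x ∈ 𝔫 the semisimple part of ρ(x) (i.e., for every x, s(x) is diagonalizable, s(x) commutes with ρ(x), and ρ(x) − s(x) is nilpotent). Then there exists an invertible matrix g ∈ GL_n(ℂ) such that g · s(x) · g^{-1} is a diagonal matrix for every x ∈ 𝔫 (the image of s is simultaneously diagonalizable). -/

import Mathlib

open Polynomial Set Module

/-- A complex square matrix is diagonalizable (semisimple) if it is conjugate to a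
diagonal matrix. -/
def Matrix.IsDiagonalizable {n : ℕ} (A : Matrix (Fin n) (Fin n) ℂ) : Prop :=
  ∃ P : Matrix (Fin n) (Fin n) ℂ, IsUnit P ∧ (P * A * P⁻¹).IsDiag

section Aux

variable {B : Type*} [Ring B] [Algebra ℂ B]

lemma aux_isUnit_aeval {W : B} (hW : IsNilpotent W) {r : ℂ[X]} (hr : r.coeff 0 ≠ 0) :
    IsUnit (aeval W r) := by
  have h1 : aeval W r = W * aeval W r.divX + algebraMap ℂ B (r.coeff 0) := by
    conv_lhs => rw [← r.X_mul_divX_add]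
    rw [map_add, map_mul, aeval_X, aeval_C]
  have hc : Commute W (aeval W r.divX) := by
    show W * aeval W r.divX = aeval W r.divX * W
    calc W * aeval W r.divX = aeval W (X * r.divX) := by rw [map_mul, aeval_X]
      _ = aeval W (r.divX * X) := by rw [mul_comm]
      _ = aeval W r.divX * W := by rw [map_mul, aeval_X]
  have hnil : IsNilpotent (W * aeval W r.divX) := hc.isNilpotent_mul_right hW
  have hu : IsUnit (algebraMap ℂ B (r.coeff 0)) :=
    (isUnit_iff_ne_zero.mpr hr).map (algebraMap ℂ B)
  rw [h1]
  exact hnil.isUnit_add_right_of_commute hu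
    ((Algebra.commutes (r.coeff 0) (W * aeval W r.divX)).symm)

lemma aux_eq_zero {W : B} (hW : IsNilpotent W) {p : ℂ[X]} (hp : Squarefree p)
    (h0 : aeval W p = 0) : W = 0 := by
  by_cases hX : X ∣ p
  · obtain ⟨r, hr⟩ := hX
    have hr0 : r.coeff 0 ≠ 0 := by
      intro h
      exact Polynomial.not_isUnit_X
        (hp X (hr ▸ mul_dvd_mul_left X (X_dvd_iff.mpr h)))
    have h0' : W * aeval W r = 0 := by
      have hx : aeval W (X * r) = W * aeval W r := by rw [map_mul, aeval_X]
      rw [← hx, ← hr, h0]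
    exact (IsUnit.mul_left_eq_zero (aux_isUnit_aeval hW hr0)).mp h0'
  · have hp0 : p.coeff 0 ≠ 0 := fun h => hX (X_dvd_iff.mpr h)
    have hu := aux_isUnit_aeval hW hp0
    rw [h0] at hu
    haveI := subsingleton_of_zero_eq_one (isUnit_zero_iff.mp hu)
    exact Subsingleton.elim _ _

variable {A : Type*} [Ring A] [Algebra ℂ A]

/-- Conjugation by a unit as an algebra automorphism. -/
noncomputable def conjAlgEquiv (u : Aˣ) : A ≃ₐ[ℂ] A where
  toFun x := ↑u * x * ↑u⁻¹
  invFun x := ↑u⁻¹ * x * ↑u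
  left_inv x := by simp [mul_assoc]
  right_inv x := by simp [mul_assoc]
  map_mul' x y := by simp [mul_assoc]
  map_add' x y := by simp [mul_add, add_mul]
  commutes' c := by
    show (↑u : A) * algebraMap ℂ A c * ↑u⁻¹ = algebraMap ℂ A c
    rw [← Algebra.commutes c (↑u : A), mul_assoc, Units.mul_inv, mul_one]

lemma aeval_units_conj (u : Aˣ) (x : A) (q : ℂ[X]) :
    aeval ((↑u : A) * x * ↑u⁻¹) q = ↑u * aeval x q * ↑u⁻¹ :=
  aeval_algHom_apply (conjAlgEquiv u).toAlgHom x q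

end Aux

lemma exists_prod_aeval_eq_zero {n : ℕ} {S : Matrix (Fin n) (Fin n) ℂ}
    (hd : S.IsDiagonalizable) :
    ∃ t : Finset ℂ, aeval S (∏ c ∈ t, (X - C c)) = 0 := by
  obtain ⟨P, hP, hD⟩ := hd
  obtain ⟨u, rfl⟩ := hP
  have hu : ((u : Matrix (Fin n) (Fin n) ℂ))⁻¹
      = ((u⁻¹ : (Matrix (Fin n) (Fin n) ℂ)ˣ) : Matrix (Fin n) (Fin n) ℂ) :=
    (Matrix.coe_units_inv u).symm
  rw [hu] at hD
  set D : Matrix (Fin n) (Fin n) ℂ :=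
    (u : Matrix (Fin n) (Fin n) ℂ) * S *
      ((u⁻¹ : (Matrix (Fin n) (Fin n) ℂ)ˣ) : Matrix (Fin n) (Fin n) ℂ) with hDdef
  refine ⟨Finset.image D.diag Finset.univ, ?_⟩
  set q : ℂ[X] := ∏ c ∈ Finset.image D.diag Finset.univ, (X - C c) with hq
  have hDq : aeval D q = 0 := by
    rw [← hD.diagonal_diag]
    have hdiag : Matrix.diagonal D.diag = Matrix.diagonalAlgHom (n := Fin n) ℂ D.diag := rfl
    rw [hdiag, aeval_algHom_apply]
    have : aeval D.diag q = 0 := by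
      funext i
      have := (aeval_algHom_apply (Pi.evalAlgHom ℂ (fun _ : Fin n => ℂ) i) D.diag q).symm
      rw [Pi.evalAlgHom_apply] at this
      rw [Pi.zero_apply, this]
      rw [hq, map_prod]
      refine Finset.prod_eq_zero (Finset.mem_image_of_mem D.diag (Finset.mem_univ i)) ?_
      simp
    rw [this, map_zero]
  have hS : S = ((u⁻¹ : (Matrix (Fin n) (Fin n) ℂ)ˣ) : Matrix (Fin n) (Fin n) ℂ) * D *
      (((u⁻¹)⁻¹ : (Matrix (Fin n) (Fin n) ℂ)ˣ) : Matrix (Fin n) (Fin n) ℂ) := by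
    rw [inv_inv, hDdef, ← Matrix.mul_assoc, ← Matrix.mul_assoc, Units.inv_mul, Matrix.one_mul,
      Matrix.mul_assoc, Units.inv_mul, Matrix.mul_one]
  rw [hS, aeval_units_conj u⁻¹ D q, hDq, mul_zero, zero_mul]

lemma coe_aeval_restrict {M : Type*} [AddCommGroup M] [Module ℂ M] {p : Submodule ℂ M}
    {f : Module.End ℂ M} (hf : MapsTo f p p) (q : ℂ[X]) (v : p) :
    ((aeval (LinearMap.restrict f hf) q) v : M) = aeval f q (v : M) := by
  have hpow : ∀ (k : ℕ) (w : p), (((LinearMap.restrict f hf) ^ k) w : M) = (f ^ k) (w : M) := by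
    intro k
    induction k with
    | zero => intro w; simp
    | succ k ih =>
      intro w
      rw [pow_succ, pow_succ, Module.End.mul_apply, Module.End.mul_apply, ih]
      rfl
  induction q using Polynomial.induction_on' with
  | add a b ha hb => simp [ha, hb]
  | monomial k c =>
    simp only [aeval_monomial, Module.End.mul_apply, Module.algebraMap_end_apply,
      SetLike.val_smul, hpow]

set_option maxHeartbeats 1000000 in
/-- Key lemma: if `S` is diagonalizable, commutes with `A`, and `A - S` is nilpotent, then `S`
acts as `μ • id` on the generalized `μ`-eigenspace of `A`. -/
lemma key_mulVec {n : ℕ} {A S : Matrix (Fin n) (Fin n) ℂ} (hd : S.IsDiagonalizable)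
    (hc : S * A = A * S) (hn : IsNilpotent (A - S)) {μ : ℂ} {v : Fin n → ℂ}
    (hv : ∃ k : ℕ, ((Matrix.toLin' A - μ • (1 : Module.End ℂ (Fin n → ℂ))) ^ k) v = 0) :
    S.mulVec v = μ • v := by
  set AA : Module.End ℂ (Fin n → ℂ) := Matrix.toLinAlgEquiv' A with hAAdef
  set SA : Module.End ℂ (Fin n → ℂ) := Matrix.toLinAlgEquiv' S with hSAdef
  have hAA : Matrix.toLin' A = AA := LinearMap.ext fun w => by
    rw [Matrix.toLin'_apply, hAAdef, Matrix.toLinAlgEquiv'_apply]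
  rw [hAA] at hv
  have hAS : Commute AA SA := by
    show AA * SA = SA * AA
    rw [hAAdef, hSAdef, ← map_mul, ← map_mul, hc]
  set E : Submodule ℂ (Fin n → ℂ) := AA.maxGenEigenspace μ with hEdef
  have hvE : v ∈ E := by
    rw [hEdef, Module.End.mem_maxGenEigenspace]
    exact hv
  have hSE : MapsTo SA E E := Module.End.mapsTo_maxGenEigenspace_of_comm hAS μ
  have h1 : MapsTo (SA - algebraMap ℂ (Module.End ℂ (Fin n → ℂ)) μ) E E := by
    intro x hx
    show (SA - algebraMap ℂ (Module.End ℂ (Fin n → ℂ)) μ) x ∈ E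
    rw [LinearMap.sub_apply, Module.algebraMap_end_apply]
    exact E.sub_mem (hSE hx) (E.smul_mem μ hx)
  have h2 : MapsTo (AA - algebraMap ℂ (Module.End ℂ (Fin n → ℂ)) μ) E E :=
    Module.End.mapsTo_maxGenEigenspace_of_comm (Algebra.mul_sub_algebraMap_commutes AA μ) μ
  have h3 : MapsTo (AA - SA) E E := by
    intro x hx
    show (AA - SA) x ∈ E
    rw [LinearMap.sub_apply]
    exact E.sub_mem (Module.End.mapsTo_maxGenEigenspace_of_comm (Commute.refl AA) μ hx) (hSE hx)
  set W := (SA - algebraMap ℂ (Module.End ℂ (Fin n → ℂ)) μ).restrict h1 with hWdef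
  have hWeq : W = (AA - algebraMap ℂ (Module.End ℂ (Fin n → ℂ)) μ).restrict h2
      - (AA - SA).restrict h3 := by
    apply LinearMap.ext
    intro x
    apply Subtype.ext
    simp only [hWdef, LinearMap.sub_apply, Submodule.coe_sub]
    change (SA - algebraMap ℂ (Module.End ℂ (Fin n → ℂ)) μ) (x : Fin n → ℂ)
      = (AA - algebraMap ℂ (Module.End ℂ (Fin n → ℂ)) μ) (x : Fin n → ℂ) - (AA - SA) (x : Fin n → ℂ)
    simp only [LinearMap.sub_apply]
    abel
  have hWnil : IsNilpotent W := by
    rw [hWeq]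
    have c1 : Commute AA (AA - SA) := (Commute.refl AA).sub_right hAS
    have c2 : Commute (algebraMap ℂ (Module.End ℂ (Fin n → ℂ)) μ) (AA - SA) :=
      Commute.sub_right (Algebra.commutes μ AA) (Algebra.commutes μ SA)
    have h_comm : Commute (AA - algebraMap ℂ (Module.End ℂ (Fin n → ℂ)) μ) (AA - SA) :=
      Commute.sub_left c1 c2
    have n1 := Module.End.isNilpotent_restrict_maxGenEigenspace_sub_algebraMap AA μ h2
    have n2 : IsNilpotent ((AA - SA).restrict h3) := by
      refine Module.End.isNilpotent.restrict h3 ?_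
      have : AA - SA = Matrix.toLinAlgEquiv' (A - S) := by rw [map_sub]
      rw [this]
      exact hn.map (Matrix.toLinAlgEquiv' : Matrix (Fin n) (Fin n) ℂ ≃ₐ[ℂ] _)
    exact Commute.isNilpotent_sub (R := Module.End ℂ E)
      (LinearMap.restrict_commute h_comm h2 h3) n1 n2
  obtain ⟨t, hq0⟩ := exists_prod_aeval_eq_zero hd
  set q : ℂ[X] := ∏ c ∈ t, (X - C c) with hqdef
  have hq0' : aeval SA q = 0 := by
    rw [hSAdef]
    have := aeval_algHom_apply
      (Matrix.toLinAlgEquiv' : Matrix (Fin n) (Fin n) ℂ ≃ₐ[ℂ] _).toAlgHom S q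
    change aeval (Matrix.toLinAlgEquiv' S) q = Matrix.toLinAlgEquiv' (aeval S q) at this
    rw [this, hq0, map_zero]
  set p' : ℂ[X] := q.comp (X + C μ) with hp'def
  have haevalW : aeval W p' = 0 := by
    apply LinearMap.ext
    intro x
    apply Subtype.ext
    rw [hWdef, coe_aeval_restrict h1 p' x]
    have : aeval (SA - algebraMap ℂ (Module.End ℂ (Fin n → ℂ)) μ) p' = aeval SA q := by
      rw [hp'def, aeval_comp, map_add, aeval_X, aeval_C, sub_add_cancel]
    rw [this, hq0']
    simp
  have hp'sq : Squarefree p' := by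
    have hform : p' = ∏ c ∈ t, (X - C (c - μ)) := by
      rw [hp'def, hqdef, prod_comp]
      refine Finset.prod_congr rfl fun c _ => ?_
      rw [sub_comp, X_comp, C_comp, map_sub]
      ring
    rw [hform]
    refine Polynomial.Separable.squarefree (separable_prod_X_sub_C_iff'.mpr ?_)
    intro a _ b _ hab
    have : a - μ + μ = b - μ + μ := by rw [hab]
    simpa using this
  have hW0 : W = 0 := aux_eq_zero (B := Module.End ℂ ↥E) hWnil hp'sq haevalW
  have := LinearMap.congr_fun hW0 ⟨v, hvE⟩
  rw [hWdef] at this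
  have hcoe := congrArg (Subtype.val) this
  change (SA - algebraMap ℂ (Module.End ℂ (Fin n → ℂ)) μ) v = (0 : Fin n → ℂ) at hcoe
  simp only [LinearMap.zero_apply, ZeroMemClass.coe_zero, LinearMap.sub_apply,
    Module.algebraMap_end_apply] at hcoe
  have hfin : SA v = μ • v := by
    rw [sub_eq_zero] at hcoe
    exact hcoe
  rw [hSAdef, Matrix.toLinAlgEquiv'_apply] at hfin
  exact hfin

attribute [local instance 100] LieRing.ofAssociativeRing

/-- Let `ρ` be a matrix representation of a finite-dimensional nilpotent complex Lie
algebra `𝔫` and let `s` assign to each `x` the semisimple part of `ρ x`.  Then the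
image of `s` is simultaneously diagonalizable. -/
theorem semisimpleParts_simultaneously_diagonalizable {L : Type*} [LieRing L]
    [LieAlgebra ℂ L] [FiniteDimensional ℂ L] [LieRing.IsNilpotent L] {n : ℕ}
    (ρ : L →ₗ⁅ℂ⁆ Matrix (Fin n) (Fin n) ℂ) (s : L → Matrix (Fin n) (Fin n) ℂ)
    (hdiag : ∀ x, (s x).IsDiagonalizable)
    (hcomm : ∀ x, s x * ρ x = ρ x * s x)
    (hnil : ∀ x, IsNilpotent (ρ x - s x)) :
    ∃ g : Matrix (Fin n) (Fin n) ℂ, IsUnit g ∧ ∀ x, (g * s x * g⁻¹).IsDiag := by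
  classical
  set M := Fin n → ℂ with hMdef
  let φ : L →ₗ⁅ℂ⁆ Module.End ℂ M :=
    (((Matrix.toLinAlgEquiv' : Matrix (Fin n) (Fin n) ℂ ≃ₐ[ℂ] Module.End ℂ M).toAlgHom :
      Matrix (Fin n) (Fin n) ℂ →ₗ⁅ℂ⁆ Module.End ℂ M)).comp ρ
  letI : LieRingModule L M := LieRingModule.compLieHom M φ
  letI : LieModule ℂ L M := LieModule.compLieHom M φ
  have htoEnd : ∀ x : L, LieModule.toEnd ℂ L M x = Matrix.toLin' (ρ x) := by
    intro x
    apply LinearMap.ext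
    intro m
    rw [LieModule.toEnd_apply_apply, LieRingModule.compLieHom_apply, Module.End.lie_apply,
      Matrix.toLin'_apply]
    rfl
  have hds := DirectSum.isInternal_submodule_of_iSupIndep_of_iSup_eq_top
    (LieSubmodule.iSupIndep_toSubmodule.mpr <|
      LieModule.iSupIndep_genWeightSpace' ℂ L M)
    (LieSubmodule.iSup_toSubmodule_eq_top.mpr <|
      LieModule.iSup_genWeightSpace_eq_top' ℂ L M)
  let v := fun χ : LieModule.Weight ℂ L M =>
    Module.finBasis ℂ (LieModule.genWeightSpace M (χ : L → ℂ) : Submodule ℂ M)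
  let b := hds.collectedBasis v
  let e := b.indexEquiv (Pi.basisFun ℂ (Fin n))
  let b' := b.reindex e
  have hbmem : ∀ i : Fin n,
      b' i ∈ LieModule.genWeightSpace M (((e.symm i).1 : L → ℂ)) := by
    intro i
    have h1 : b' i = b (e.symm i) := Module.Basis.reindex_apply b e i
    rw [h1]
    have h2 := hds.collectedBasis_coe v
    have h3 : b (e.symm i) = ↑(v (e.symm i).1 (e.symm i).2) := by
      rw [show b (e.symm i) = (⇑(hds.collectedBasis v)) (e.symm i) from rfl, h2]
    rw [h3]
    exact Submodule.coe_mem _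
  have keyeq : ∀ (x : L) (i : Fin n),
      (s x).mulVec (b' i) = ((e.symm i).1 x) • b' i := by
    intro x i
    refine key_mulVec (hdiag x) (hcomm x) (hnil x) ?_
    have := (LieModule.mem_genWeightSpace M (((e.symm i).1 : L → ℂ)) (b' i)).mp (hbmem i) x
    rw [htoEnd x] at this
    exact this
  set P : Matrix (Fin n) (Fin n) ℂ := (Pi.basisFun ℂ (Fin n)).toMatrix ⇑b' with hPdef
  set Q : Matrix (Fin n) (Fin n) ℂ := b'.toMatrix ⇑(Pi.basisFun ℂ (Fin n)) with hQdef
  have hQP : Q * P = 1 := Basis.toMatrix_mul_toMatrix_flip b' (Pi.basisFun ℂ (Fin n))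
  have hPQ : P * Q = 1 := Basis.toMatrix_mul_toMatrix_flip (Pi.basisFun ℂ (Fin n)) b'
  refine ⟨Q, ⟨⟨Q, P, hQP, hPQ⟩, rfl⟩, ?_⟩
  intro x
  have hcol : ∀ j k, P k j = b' j k := by
    intro j k
    rw [hPdef, Basis.toMatrix_apply, Pi.basisFun_repr]
  have hSP : s x * P = P * Matrix.diagonal (fun i => ((e.symm i).1 x)) := by
    ext i j
    rw [Matrix.mul_apply, Matrix.mul_diagonal]
    have lhs : ∑ k, s x i k * P k j = (s x).mulVec (b' j) i := by
      rw [Matrix.mulVec, dotProduct]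
      exact Finset.sum_congr rfl fun k _ => by rw [hcol j k]
    rw [lhs, keyeq x j, Pi.smul_apply, smul_eq_mul, hcol j i, mul_comm]
  have hQinv : Q⁻¹ = P := Matrix.inv_eq_right_inv hQP
  rw [hQinv]
  have hfinal : Q * s x * P = Matrix.diagonal (fun i => ((e.symm i).1 x)) := by
    rw [Matrix.mul_assoc, hSP, ← Matrix.mul_assoc, hQP, Matrix.one_mul]
  rw [hfinal]
  exact Matrix.isDiag_diagonal _
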